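/- Let S¹_ℚ := {e^{ix} : x ∈ ℚ} with the subspace topology from the unit circle S¹, and let O be an open neighbourhood of S¹_ℚ × {0} in S¹_ℚ × [0,1]. Then there exist a set J ⊆ ℕ and a family (A_j, t_j)_{j∈J} such that: each A_j is open in S¹_ℚ; each t_j belongs to (0,1]; A_j × [0, t_j) ⊆ O for every j ∈ J; the sets A_j are pairwise disjoint and their union is S¹_ℚ; and the greatest lower bound of {t_j : j ∈ J} is 0. -/

import Mathlib

universe u v w v'

/-! ## Ordered bases and locally ordered spaces -/

/-- An *ordered subset* of `X`: a pair of a carrier set and a relation on `X`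
(intended to be a partial order on the carrier). -/
structure OSet (X : Type u) : Type u where
  carrier : Set X
  le : X → X → Prop

namespace OSet

variable {X : Type u} {Y : Type v}

/-- `B` is a partially ordered subset: the relation only relates elements of the
carrier, is reflexive on the carrier, antisymmetric and transitive. -/
def IsPoset (B : OSet X) : Prop :=
  (∀ p q, B.le p q → p ∈ B.carrier ∧ q ∈ B.carrier) ∧
  (∀ p ∈ B.carrier, B.le p p) ∧
  (∀ p q, B.le p q → B.le q p → p = q) ∧
  (∀ p q r, B.le p q → B.le q r → B.le p r)

/-- `B ⊆_lax B'`. -/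
def laxSub (B B' : OSet X) : Prop :=
  B.carrier ⊆ B'.carrier ∧ ∀ p q, B.le p q → B'.le p q

/-- `B ⊆_str B'` : the carrier is included and `≤_B` is the restriction of `≤_{B'}`
to the carrier of `B`. -/
def strSub (B B' : OSet X) : Prop :=
  B.carrier ⊆ B'.carrier ∧ ∀ p ∈ B.carrier, ∀ q ∈ B.carrier, (B.le p q ↔ B'.le p q)

/-- Product of two ordered subsets, with the product order. -/
def prod (B : OSet X) (B' : OSet Y) : OSet (X × Y) where
  carrier := B.carrier ×ˢ B'.carrier
  le p q := B.le p.1 q.1 ∧ B'.le p.2 q.2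

/-- The restriction of an ordered subset to a subset `S` (of its carrier). -/
def restrict (B : OSet X) (S : Set X) : OSet X where
  carrier := S
  le p q := B.le p q ∧ p ∈ S ∧ q ∈ S

/-- `B` is a Nachbin ordered (sub)space: its order is closed in the product of the
subspace `B.carrier` (with the topology inherited from `X`) with itself. -/
def IsNachbin [TopologicalSpace X] (B : OSet X) : Prop :=
  IsClosed {p : B.carrier × B.carrier | B.le p.1 p.2}

end OSet

/-- `𝔅` is an *ordered basis* on the topological space `X`. -/
structure IsOrderedBasis {X : Type u} [TopologicalSpace X] (𝔅 : Set (OSet X)) : Prop where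
  isPoset : ∀ B ∈ 𝔅, B.IsPoset
  isBasis : TopologicalSpace.IsTopologicalBasis (OSet.carrier '' 𝔅)
  compat : ∀ x : X, ∀ B ∈ 𝔅, ∀ B' ∈ 𝔅, x ∈ B.carrier → x ∈ B'.carrier →
    ∃ B'' ∈ 𝔅, x ∈ B''.carrier ∧ B''.carrier ⊆ B.carrier ∩ B'.carrier ∧
      ∀ p q, B''.le p q → B.le p q ∧ B'.le p q

/-- `𝔅` is a *strict* ordered basis: the interpolating element `B''` can be chosen
with `B'' ⊆_str B` and `B'' ⊆_str B'`. -/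
def IsStrictOrderedBasis {X : Type u} [TopologicalSpace X] (𝔅 : Set (OSet X)) : Prop :=
  IsOrderedBasis 𝔅 ∧
    ∀ x : X, ∀ B ∈ 𝔅, ∀ B' ∈ 𝔅, x ∈ B.carrier → x ∈ B'.carrier →
      ∃ B'' ∈ 𝔅, x ∈ B''.carrier ∧ B''.strSub B ∧ B''.strSub B'

/-- `𝔅'` is coarser than `𝔅`. -/
def CoarserThan {X : Type u} (𝔅' 𝔅 : Set (OSet X)) : Prop :=
  ∀ x : X, ∀ B' ∈ 𝔅', x ∈ B'.carrier → ∃ B ∈ 𝔅, x ∈ B.carrier ∧ B.laxSub B'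

/-- `𝔅'` is strictly coarser than `𝔅` (`⊆_lax` replaced by `⊆_str`). -/
def StrictCoarserThan {X : Type u} (𝔅' 𝔅 : Set (OSet X)) : Prop :=
  ∀ x : X, ∀ B' ∈ 𝔅', x ∈ B'.carrier → ∃ B ∈ 𝔅, x ∈ B.carrier ∧ B.strSub B'

/-- Two ordered bases are equivalent when each is coarser than the other. -/
def EquivBases {X : Type u} (𝔅 𝔅' : Set (OSet X)) : Prop :=
  CoarserThan 𝔅' 𝔅 ∧ CoarserThan 𝔅 𝔅'

/-- Strict equivalence of ordered bases. -/
def StrictEquivBases {X : Type u} (𝔅 𝔅' : Set (OSet X)) : Prop :=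
  StrictCoarserThan 𝔅' 𝔅 ∧ StrictCoarserThan 𝔅 𝔅'

/-- The *open posets* `Ō(𝔅)` determined by an ordered basis `𝔅`. -/
def openPosets {X : Type u} (𝔅 : Set (OSet X)) : Set (OSet X) :=
  {A | ∀ x ∈ A.carrier, ∃ B ∈ 𝔅, x ∈ B.carrier ∧ B.laxSub A}

/-- `f` is locally increasing at `x`, w.r.t. the ordered bases `𝔅` (source) and
`𝔅'` (target). -/
def LocIncrAt {X : Type u} {Y : Type v} (𝔅 : Set (OSet X)) (𝔅' : Set (OSet Y))
    (f : X → Y) (x : X) : Prop :=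
  ∀ B' ∈ 𝔅', f x ∈ B'.carrier →
    ∃ B ∈ 𝔅, x ∈ B.carrier ∧ (∀ p ∈ B.carrier, f p ∈ B'.carrier) ∧
      ∀ p q, B.le p q → B'.le (f p) (f q)

/-- `f` is locally increasing. -/
def LocIncr {X : Type u} {Y : Type v} (𝔅 : Set (OSet X)) (𝔅' : Set (OSet Y))
    (f : X → Y) : Prop :=
  ∀ x : X, LocIncrAt 𝔅 𝔅' f x

/-- The locally ordered space given by the basis `𝔅` is locally Nachbin. -/
def IsLocallyNachbin {X : Type u} [TopologicalSpace X] (𝔅 : Set (OSet X)) : Prop :=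
  ∀ x : X, ∀ O ∈ openPosets 𝔅, x ∈ O.carrier →
    ∃ O' ∈ openPosets 𝔅, x ∈ O'.carrier ∧ O'.laxSub O ∧ O'.IsNachbin

/-- The product ordered basis on `X × Y`. -/
def prodBasis {X : Type u} {Y : Type v} (𝔅 : Set (OSet X)) (𝔅' : Set (OSet Y)) :
    Set (OSet (X × Y)) :=
  {C | ∃ B ∈ 𝔅, ∃ B' ∈ 𝔅', C = B.prod B'}

/-- A topological space viewed as a locally ordered space: all its open subsets,
each ordered by equality. -/
def trivBasis (T : Type v) [TopologicalSpace T] : Set (OSet T) :=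
  {B | ∃ U : Set T, IsOpen U ∧ B = ⟨U, fun p q => p = q ∧ p ∈ U⟩}

/-! ## The directed circle -/

/-- The proper open arc `{e^{ix} : a < x < b}` of the unit circle, with its
standard partial order. -/
def arcOSet (a b : ℝ) : OSet Circle where
  carrier := Circle.exp '' Set.Ioo a b
  le p q := ∃ x ∈ Set.Ioo a b, ∃ y ∈ Set.Ioo a b, x ≤ y ∧ Circle.exp x = p ∧ Circle.exp y = q

/-- The strict ordered basis of the directed circle `S⃗¹`: all proper open arcs
with their standard orders. -/
def dCircleBasis : Set (OSet Circle) :=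
  {B | ∃ a b : ℝ, 0 < b - a ∧ b - a < 2 * Real.pi ∧ B = arcOSet a b}

/-- `K(f) = {t | ∀ s s', f (s,t) = f (s',t)}`. -/
def Kset {X : Type u} {Y : Type v} (f : Circle × X → Y) : Set X :=
  {t | ∀ s s' : Circle, f (s, t) = f (s', t)}

/-! ## The rational circle and the space `W` -/

/-- The rational circle `S¹_ℚ = {e^{ix} : x ∈ ℚ}` as a subset of the circle. -/
def SQ : Set Circle := {z | ∃ x : ℚ, Circle.exp (x : ℝ) = z}

/-- The trace on `S¹_ℚ` of a proper open arc, with the inherited order. -/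
def sqArcOSet (a b : ℝ) : OSet ↥SQ where
  carrier := {z : ↥SQ | (z : Circle) ∈ Circle.exp '' Set.Ioo a b}
  le p q := (arcOSet a b).le (p : Circle) (q : Circle)

/-- The ordered basis of the directed rational circle `S⃗¹_ℚ`. -/
def sqBasis : Set (OSet ↥SQ) :=
  {B | ∃ a b : ℝ, 0 < b - a ∧ b - a < 2 * Real.pi ∧ B = sqArcOSet a b}

/-- The underlying set of `W := {0} ⊔ (S¹_ℚ × (0,1])`. -/
def Wsp : Type := Unit ⊕ (↥SQ × ↥(Set.Ioc (0 : ℝ) 1))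

open Classical in
/-- The quotient map `q : S¹_ℚ × [0,1] → W` collapsing `S¹_ℚ × {0}` to the
point `0`. -/
noncomputable def qW : ↥SQ × unitInterval → Wsp := fun p =>
  if h : (0 : ℝ) < (p.2 : ℝ) then
    Sum.inr (p.1, ⟨(p.2 : ℝ), Set.mem_Ioc.mpr ⟨h, (Set.mem_Icc.mp p.2.2).2⟩⟩)
  else Sum.inl ()

/-- `W` carries the final topology of `q`. -/
noncomputable instance Wsp.topology : TopologicalSpace Wsp :=
  TopologicalSpace.coinduced qW inferInstance

/-- The subset `O_h = {0} ⊔ {(s,t) : t < h s}` of `W`. -/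
def OhSet (h : ↥SQ → ℝ) : Set Wsp :=
  Sum.inl '' (Set.univ : Set Unit) ∪
    Sum.inr '' {p : ↥SQ × ↥(Set.Ioc (0 : ℝ) 1) | (p.2 : ℝ) < h p.1}

/-- The poset `(O_h, ≤_h)` : `0 ≤_h 0`, and `(s,t) ≤_h (s',t')` iff `t = t'` and
there is a proper open arc `α` with `s ≤_α s'` and `(α ∩ S¹_ℚ) × {t} ⊆ O_h`. -/
def OhOSet (h : ↥SQ → ℝ) : OSet Wsp where
  carrier := OhSet h
  le w w' :=
    (w = Sum.inl () ∧ w' = Sum.inl ()) ∨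
      ∃ (s s' : ↥SQ) (t : ↥(Set.Ioc (0 : ℝ) 1)),
        w = Sum.inr (s, t) ∧ w' = Sum.inr (s', t) ∧
          ∃ a b : ℝ, 0 < b - a ∧ b - a < 2 * Real.pi ∧
            (arcOSet a b).le (s : Circle) (s' : Circle) ∧
            ∀ z : ↥SQ, (z : Circle) ∈ Circle.exp '' Set.Ioo a b →
              (Sum.inr (z, t) : Wsp) ∈ OhSet h

/-- The trace `(α ∩ S¹_ℚ) × (a',b')` in `W`, ordered by `(s,t) ≤ (s',t')` iff
`s ≤_α s'` and `t = t'`. -/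
def stripOSet (a b a' b' : ℝ) : OSet Wsp where
  carrier :=
    Sum.inr '' {p : ↥SQ × ↥(Set.Ioc (0 : ℝ) 1) |
      (p.1 : Circle) ∈ Circle.exp '' Set.Ioo a b ∧ (p.2 : ℝ) ∈ Set.Ioo a' b'}
  le w w' :=
    ∃ (s s' : ↥SQ) (t : ↥(Set.Ioc (0 : ℝ) 1)),
      w = Sum.inr (s, t) ∧ w' = Sum.inr (s', t) ∧ (t : ℝ) ∈ Set.Ioo a' b' ∧
        (s : Circle) ∈ Circle.exp '' Set.Ioo a b ∧
        (s' : Circle) ∈ Circle.exp '' Set.Ioo a b ∧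
        (arcOSet a b).le (s : Circle) (s' : Circle)

/-- The set `ℋ` of continuous, strictly positive functions `h : S¹_ℚ → [0,1]`
with infimum `0`. -/
def memH (h : ↥SQ → ℝ) : Prop :=
  Continuous h ∧ (∀ s, 0 < h s) ∧ (∀ s, h s ≤ 1) ∧ IsGLB (Set.range h) 0

/-- The ordered basis of `W`: the posets `O_h` (`h ∈ ℋ`) together with the traces
`(α ∩ S¹_ℚ) × (a',b')` with `0 < a' < b' ≤ 1`. -/
def Wbasis : Set (OSet Wsp) :=
  {B | (∃ h : ↥SQ → ℝ, memH h ∧ B = OhOSet h) ∨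
    ∃ a b a' b' : ℝ, 0 < b - a ∧ b - a < 2 * Real.pi ∧ 0 < a' ∧ a' < b' ∧ b' ≤ 1 ∧
      B = stripOSet a b a' b'}

/-- The point `1 = e^{i·0}` of the rational circle. -/
noncomputable def oneSQ : ↥SQ := ⟨1, 0, by simp⟩



noncomputable def sqPhi : ↥SQ → ℝ := fun z => Complex.arg (z : Circle)

lemma mem_slit_SQ (z : ↥SQ) : ((z : Circle) : ℂ) ∈ Complex.slitPlane := by
  rw [Complex.mem_slitPlane_iff]
  by_contra h
  push_neg at h
  obtain ⟨h1, h2⟩ := h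
  have habs : ‖((z : Circle) : ℂ)‖ = 1 := Circle.norm_coe (z : Circle)
  have hre : ((z : Circle) : ℂ).re = -1 := by
    have := Complex.sq_norm ((z : Circle) : ℂ)
    rw [habs, Complex.normSq_apply, h2] at this
    nlinarith
  have hz : ((z : Circle) : ℂ) = -1 := by
    apply Complex.ext <;> simp [hre, h2]
  obtain ⟨q, hq⟩ := z.2
  rw [← hq, Circle.coe_exp] at hz
  have hpi : Complex.exp ((q:ℝ) * Complex.I) = Complex.exp (Real.pi * Complex.I) := by
    rw [hz, Complex.exp_pi_mul_I]
  rw [Complex.exp_eq_exp_iff_exists_int] at hpi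
  obtain ⟨n, hn⟩ := hpi
  have : (q : ℝ) = Real.pi + n * (2 * Real.pi) := by
    have := congrArg Complex.im hn
    simpa using this
  have hne : ((1:ℤ) + 2*n : ℤ) ≠ 0 := by omega
  have hne' : (((1:ℤ) + 2*n : ℤ) : ℚ) ≠ 0 := by exact_mod_cast hne
  have hpi2 : Real.pi = ((q / (((1:ℤ) + 2*n : ℤ) : ℚ) : ℚ) : ℝ) := by
    have hne'' : ((1:ℝ) + 2*(n:ℝ)) ≠ 0 := by
      exact_mod_cast hne
    push_cast
    rw [eq_div_iff hne'']
    linear_combination (-1)*this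
  exact irrational_pi ⟨_, hpi2.symm⟩

lemma sqPhi_cont : Continuous sqPhi := by
  have h : Continuous (fun z : ↥SQ => ((z : Circle) : ℂ)) :=
    continuous_subtype_val.comp continuous_subtype_val
  have heq : sqPhi = Complex.arg ∘ (fun z : ↥SQ => ((z : Circle) : ℂ)) := rfl
  rw [heq]
  exact continuous_iff_continuousAt.2 fun z =>
    ContinuousAt.comp (Complex.continuousAt_arg (mem_slit_SQ z)) h.continuousAt

lemma exp_sqPhi (z : ↥SQ) : Circle.exp (sqPhi z) = (z : Circle) := by
  apply Subtype.ext
  rw [Circle.coe_exp]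
  have := Complex.norm_mul_exp_arg_mul_I ((z : Circle) : ℂ)
  rw [Circle.norm_coe (z : Circle)] at this
  simpa [sqPhi] using this

instance : Countable ↥SQ := by
  have : SQ = Set.range (fun q : ℚ => Circle.exp (q : ℝ)) := by
    ext z; simp [SQ, Set.range]
  rw [this]
  exact Set.countable_range _ |>.to_subtype

lemma exists_notin_countable {a b : ℝ} (hab : a < b) {S : Set ℝ} (hS : S.Countable) :
    ∃ x ∈ Set.Ioo a b, x ∉ S := by
  by_contra h
  push_neg at h
  have hsub : Set.Ioo a b ⊆ S := h
  have h1 : MeasureTheory.volume (Set.Ioo a b) = 0 :=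
    le_antisymm (le_trans (MeasureTheory.measure_mono hsub) (hS.measure_zero _).le) zero_le
  rw [Real.volume_Ioo] at h1
  simp [ENNReal.ofReal_eq_zero] at h1
  linarith

/-- clopen neighborhoods inside open sets -/
lemma exists_clopen_SQ (s : ↥SQ) (U : Set ↥SQ) (hU : IsOpen U) (hs : s ∈ U) :
    ∃ C : Set ↥SQ, IsOpen C ∧ IsClosed C ∧ s ∈ C ∧ C ⊆ U := by
  obtain ⟨V, hVopen, hVeq⟩ := isOpen_induced_iff.1 hU
  have hsV : (s : Circle) ∈ V := by rw [← hVeq] at hs; exact hs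
  have hexpV : (sqPhi s) ∈ Circle.exp ⁻¹' V := by
    simp only [Set.mem_preimage, exp_sqPhi]; exact hsV
  obtain ⟨ε, hε, hball⟩ := Metric.isOpen_iff.1
    (hVopen.preimage Circle.exp.continuous) _ hexpV
  have hcnt : (Set.range sqPhi).Countable := Set.countable_range sqPhi
  obtain ⟨u, hu, hunr⟩ := exists_notin_countable (show sqPhi s - ε < sqPhi s by linarith) hcnt
  obtain ⟨v, hv, hvnr⟩ := exists_notin_countable (show sqPhi s < sqPhi s + ε by linarith) hcnt
  refine ⟨sqPhi ⁻¹' Set.Ioo u v, sqPhi_cont.isOpen_preimage _ isOpen_Ioo, ?_, ⟨hu.2, hv.1⟩, ?_⟩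
  · have : sqPhi ⁻¹' Set.Ioo u v = sqPhi ⁻¹' Set.Icc u v := by
      ext z
      simp only [Set.mem_preimage, Set.mem_Ioo, Set.mem_Icc]
      constructor
      · rintro ⟨h1, h2⟩; exact ⟨h1.le, h2.le⟩
      · rintro ⟨h1, h2⟩
        refine ⟨h1.lt_of_ne ?_, h2.lt_of_ne ?_⟩
        · intro h; exact hunr ⟨z, h.symm⟩
        · intro h; exact hvnr ⟨z, h⟩
    rw [this]
    exact IsClosed.preimage sqPhi_cont isClosed_Icc
  · intro z hz
    have hzball : sqPhi z ∈ Metric.ball (sqPhi s) ε := by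
      simp only [Metric.mem_ball, Real.dist_eq, abs_sub_lt_iff]
      obtain ⟨h1, h2⟩ := hz
      constructor <;> [linarith [hu.1, hv.2]; linarith [hu.1, hv.2]]
    have : Circle.exp (sqPhi z) ∈ V := hball hzball
    rw [exp_sqPhi] at this
    rw [← hVeq]
    exact this

/-- For any open neighbourhood `O` of `S¹_ℚ × {0}` in
`S¹_ℚ × [0,1]` there is a family `(A_j, t_j)` indexed by `J ⊆ ℕ` such that:
each `A_j` is open, each `t_j ∈ (0,1]`, `A_j × [0,t_j) ⊆ O`, the `A_j` form a
partition of `S¹_ℚ`, and the greatest lower bound of `{t_j}` is `0`. -/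
theorem stmt18 (O : Set (↥SQ × unitInterval)) (hO : IsOpen O)
    (hO0 : ∀ s : ↥SQ, (s, (0 : unitInterval)) ∈ O) :
    ∃ (J : Set ℕ) (A : ℕ → Set ↥SQ) (t : ℕ → ℝ),
      (∀ j ∈ J, IsOpen (A j)) ∧
      (∀ j ∈ J, t j ∈ Set.Ioc (0 : ℝ) 1) ∧
      (∀ j ∈ J, ∀ s ∈ A j, ∀ u : unitInterval, (u : ℝ) < t j → (s, u) ∈ O) ∧
      (∀ j ∈ J, ∀ k ∈ J, j ≠ k → Disjoint (A j) (A k)) ∧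
      (⋃ j ∈ J, A j) = Set.univ ∧
      IsGLB (t '' J) 0 := by
  classical
  have key : ∀ s : ↥SQ, ∃ (m : ℕ) (C : Set ↥SQ), IsOpen C ∧ IsClosed C ∧ s ∈ C ∧
      ∀ z ∈ C, ∀ u : unitInterval, (u : ℝ) < 1 / (m + 1) → (z, u) ∈ O := by
    intro s
    obtain ⟨U, V, hUo, hVo, hsU, h0V, hUV⟩ := isOpen_prod_iff.1 hO s 0 (hO0 s)
    obtain ⟨ε, hε, hball⟩ := Metric.isOpen_iff.1 hVo 0 h0V
    obtain ⟨m, hm⟩ := exists_nat_one_div_lt hε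
    obtain ⟨C, hCo, hCc, hsC, hCU⟩ := exists_clopen_SQ s U hUo hsU
    refine ⟨m, C, hCo, hCc, hsC, fun z hz u hu => ?_⟩
    apply hUV
    refine ⟨hCU hz, hball ?_⟩
    rw [Metric.mem_ball, Subtype.dist_eq, Real.dist_eq]
    have h0 : (0 : ℝ) ≤ (u : ℝ) := u.2.1
    rw [show ((0 : unitInterval) : ℝ) = 0 from rfl, sub_zero, abs_of_nonneg h0]
    calc (u : ℝ) < 1 / (m + 1) := hu
      _ < ε := hm
  choose nn C hCo hCc hmemC hslab using key
  haveI : Nonempty ↥SQ := ⟨oneSQ⟩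
  obtain ⟨e, he⟩ := exists_surjective_nat ↥SQ
  set D : ℕ → Set ↥SQ := fun k => C (e k) \ ⋃ i ∈ Finset.range k, C (e i) with hD
  have hDo : ∀ k, IsOpen (D k) := fun k =>
    (hCo (e k)).sdiff (isClosed_biUnion_finset fun i _ => hCc (e i))
  have hDsub : ∀ k, D k ⊆ C (e k) := fun k => Set.diff_subset
  refine ⟨Set.univ, fun m => ⋃ k ∈ {k | nn (e k) = m}, D k, fun m => 1 / (m + 1),
    ?_, ?_, ?_, ?_, ?_, ?_⟩
  · exact fun m _ => isOpen_biUnion fun k _ => hDo k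
  · intro m _
    constructor
    · positivity
    · rw [div_le_one (by positivity)]
      have : (1:ℝ) ≤ m + 1 := by exact_mod_cast Nat.one_le_iff_ne_zero.2 (Nat.succ_ne_zero m)
      linarith
  · intro j _ s hs u hu
    simp only [Set.mem_iUnion] at hs
    obtain ⟨k, hk, hsk⟩ := hs
    exact hslab (e k) s (hDsub k hsk) u (by rw [← hk] at hu; exact_mod_cast hu)
  · intro j _ k _ hjk
    rw [Set.disjoint_left]
    intro x hxj hxk
    simp only [Set.mem_iUnion] at hxj hxk
    obtain ⟨a, ha, hxa⟩ := hxj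
    obtain ⟨b, hb, hxb⟩ := hxk
    have hab : a ≠ b := fun h => hjk (by rw [← ha, ← hb, h])
    rcases hab.lt_or_gt with h | h
    · exact hxb.2 (Set.mem_biUnion (Finset.mem_range.2 h) hxa.1)
    · exact hxa.2 (Set.mem_biUnion (Finset.mem_range.2 h) hxb.1)
  · ext x
    simp only [Set.mem_univ, iff_true]
    have hex : ∃ k, x ∈ C (e k) := by
      obtain ⟨k, rfl⟩ := he x
      exact ⟨k, hmemC _⟩
    have hxD : x ∈ D (Nat.find hex) := by
      refine ⟨Nat.find_spec hex, ?_⟩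
      intro hmem
      simp only [Set.mem_iUnion] at hmem
      obtain ⟨i, hi, hxi⟩ := hmem
      exact Nat.find_min hex (Finset.mem_range.1 hi) hxi
    exact Set.mem_biUnion (Set.mem_univ (nn (e (Nat.find hex))))
      (Set.mem_biUnion rfl hxD)
  · rw [Set.image_univ]
    constructor
    · rintro y ⟨m, rfl⟩
      positivity
    · intro b hb
      have hble : ∀ m : ℕ, b ≤ 1 / ((m : ℝ) + 1) := fun m => hb ⟨m, rfl⟩
      exact ge_of_tendsto' tendsto_one_div_add_atTop_nhds_zero_nat hble
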